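/- arXiv:1709.00792 — 3 statements merged into one kernel-verified Lean document; each statement's English description precedes it below -/
import Mathlib

section
/- Let G and G' be finite simple graphs whose A_α matrices have the same characteristic polynomial for some real α with 0 ≤ α ≤ 1. If G is r-regular (every vertex of G has degree r), then G' is also r-regular. -/
open SimpleGraph Matrix Finset Polynomial

attribute [local instance] Classical.propDecidable

/-- The matrix `A_α(G) = α·D(G) + (1-α)·A(G)` of a finite simple graph `G`,
where `D(G)` is the diagonal matrix of vertex degrees and `A(G)` is the
adjacency matrix over `ℝ`. -/
noncomputable def Aalpha {V : Type} [Fintype V] (G : SimpleGraph V) (α : ℝ) :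
    Matrix V V ℝ :=
  α • Matrix.diagonal (fun v => (G.degree v : ℝ)) + (1 - α) • G.adjMatrix ℝ

/-- `G` is determined by its `A_α`-spectrum: every finite simple graph whose
`A_α` matrix has the same characteristic polynomial as that of `G` is
isomorphic to `G`. -/
def IsDSAalpha {V : Type} [Fintype V] (G : SimpleGraph V) (α : ℝ) : Prop :=
  ∀ (W : Type) [Fintype W] (H : SimpleGraph W),
    (Aalpha H α).charpoly = (Aalpha G α).charpoly → Nonempty (H ≃g G)

/-- The largest eigenvalue of a matrix: the supremum of the (real) roots of its
characteristic polynomial.  For a real symmetric matrix these roots are exactly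
its eigenvalues. -/
noncomputable def lambda1 {V : Type} [Fintype V] (M : Matrix V V ℝ) : ℝ :=
  sSup {x : ℝ | M.charpoly.IsRoot x}

/-- The join `G ∨ H` of two graphs: their disjoint union together with all
edges joining a vertex of `G` to a vertex of `H`. -/
def joinG {V W : Type} (G : SimpleGraph V) (H : SimpleGraph W) :
    SimpleGraph (V ⊕ W) :=
  (G ⊕g H) ⊔ completeBipartiteGraph V W

/-- The `M`-coronal `Γ_M(x) = 1ᵀ (xI − M)⁻¹ 1`: the sum of all entries of
`(xI − M)⁻¹`. -/
noncomputable def coronal {V : Type} [Fintype V] (M : Matrix V V ℝ) (x : ℝ) : ℝ :=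
  ∑ i, ∑ j, (x • (1 : Matrix V V ℝ) - M)⁻¹ i j

/-- Disjoint union of a family of graphs: two vertices are adjacent iff they lie
in the same summand and are adjacent there. -/
def sigmaGraph {ι : Type} {F : ι → Type} (G : ∀ i, SimpleGraph (F i)) :
    SimpleGraph (Σ i, F i) :=
  SimpleGraph.fromRel (fun x y => ∃ h : x.1 = y.1, (G y.1).Adj (h ▸ x.2) y.2)

section aux
variable {n : Type} [Fintype n] [DecidableEq n]

lemma myCharpoly_conj (U W A : Matrix n n ℝ) (h1 : U * W = 1) :
    (U * A * W).charpoly = A.charpoly := by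
  have h2 : W * U = 1 := mul_eq_one_comm.mp h1
  unfold Matrix.charpoly
  have hsc : (U.map C) * (Matrix.scalar n (X : ℝ[X])) * (W.map C)
      = Matrix.scalar n (X : ℝ[X]) := by
    rw [Matrix.scalar_apply, ← Matrix.smul_one_eq_diagonal, Matrix.mul_smul, Matrix.mul_one,
      Matrix.smul_mul, ← Matrix.map_mul, h1, Matrix.map_one _ (map_zero C) (map_one C),
      Matrix.smul_one_eq_diagonal]
  have key : charmatrix (U * A * W) = U.map C * charmatrix A * W.map C := by
    unfold charmatrix
    rw [Matrix.mul_sub, Matrix.sub_mul, hsc]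
    congr 1
    simp only [RingHom.mapMatrix_apply]
    rw [← Matrix.map_mul, ← Matrix.map_mul]
  rw [key, det_mul, det_mul, mul_comm, ← mul_assoc, ← det_mul, ← Matrix.map_mul, h2]
  simp

lemma myCharpoly_diagonal (d : n → ℝ) :
    (Matrix.diagonal d).charpoly = ∏ i, (X - C (d i)) := by
  unfold Matrix.charpoly
  have : charmatrix (Matrix.diagonal d) = Matrix.diagonal (fun i => X - C (d i)) := by
    ext i j
    by_cases hij : i = j
    · subst hij; simp
    · simp [charmatrix_apply_ne _ _ _ hij, Matrix.diagonal_apply_ne _ hij]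
  rw [this, det_diagonal]

lemma myCharpoly_hermitian (A : Matrix n n ℝ) (hA : A.IsHermitian) :
    A.charpoly = ∏ i, (X - C (hA.eigenvalues i)) := by
  have hofreal : (RCLike.ofReal ∘ hA.eigenvalues : n → ℝ) = hA.eigenvalues := by
    ext i; simp
  conv_lhs => rw [hA.spectral_theorem, Unitary.conjStarAlgAut_apply]
  rw [hofreal, myCharpoly_conj _ _ _ (Matrix.mem_unitaryGroup_iff.mp hA.eigenvectorUnitary.2),
    myCharpoly_diagonal]

lemma myEval_charpoly (A : Matrix n n ℝ) (x : ℝ) :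
    A.charpoly.eval x = (x • (1 : Matrix n n ℝ) - A).det := by
  unfold Matrix.charpoly
  rw [← coe_evalRingHom, RingHom.map_det]
  congr 1
  ext i j
  by_cases hij : i = j
  · subst hij; simp [charmatrix_apply_eq, Matrix.one_apply]
  · simp [charmatrix_apply_ne _ _ _ hij, Matrix.one_apply_ne hij]

lemma myTrace_sq_hermitian (A : Matrix n n ℝ) (hA : A.IsHermitian) :
    (A * A).trace = ∑ i, hA.eigenvalues i ^ 2 := by
  have hofreal : (RCLike.ofReal ∘ hA.eigenvalues : n → ℝ) = hA.eigenvalues := by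
    ext i; simp
  set U : Matrix n n ℝ := (hA.eigenvectorUnitary : Matrix n n ℝ)
  have h1 : U * star U = 1 := Matrix.mem_unitaryGroup_iff.mp hA.eigenvectorUnitary.2
  have h2 : star U * U = 1 := mul_eq_one_comm.mp h1
  set D : Matrix n n ℝ := Matrix.diagonal hA.eigenvalues
  have hsp : A = U * D * star U := by
    conv_lhs => rw [hA.spectral_theorem, Unitary.conjStarAlgAut_apply]
    rw [hofreal]
  have hassoc : U * D * star U * (U * D * star U) = U * (D * D) * star U := by
    simp only [mul_assoc]
    rw [← mul_assoc (star U) U (D * star U), h2, one_mul]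
  conv_lhs => rw [hsp]
  rw [hassoc, Matrix.trace_mul_cycle, ← mul_assoc, h2, one_mul, Matrix.diagonal_mul_diagonal,
    Matrix.trace_diagonal]
  exact Finset.sum_congr rfl fun i _ => (sq _).symm
end aux

lemma aalpha_isHermitian {X : Type} [Fintype X] (H : SimpleGraph X) (α : ℝ) :
    (Aalpha H α).IsHermitian := by
  show (Aalpha H α)ᴴ = Aalpha H α
  rw [Matrix.conjTranspose_eq_transpose_of_trivial]
  unfold Aalpha
  rw [Matrix.transpose_add, Matrix.transpose_smul, Matrix.transpose_smul,
    Matrix.diagonal_transpose, SimpleGraph.transpose_adjMatrix]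

lemma sum_row_aalpha {X : Type} [Fintype X] (H : SimpleGraph X) (α : ℝ) (v : X) :
    (Aalpha H α *ᵥ (fun _ => (1 : ℝ))) v = (H.degree v : ℝ) := by
  unfold Aalpha
  rw [Matrix.add_mulVec, Matrix.smul_mulVec, Matrix.smul_mulVec]
  have h1 : (H.adjMatrix ℝ *ᵥ (fun _ => (1:ℝ))) v = (H.degree v : ℝ) := by
    rw [SimpleGraph.adjMatrix_mulVec_apply]
    simp
  simp only [Pi.add_apply, Pi.smul_apply, Matrix.mulVec_diagonal, h1, smul_eq_mul]
  ring

lemma trace_aalpha {X : Type} [Fintype X] (H : SimpleGraph X) (α : ℝ) :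
    (Aalpha H α).trace = α * ∑ v, (H.degree v : ℝ) := by
  unfold Aalpha
  rw [Matrix.trace_add, Matrix.trace_smul, Matrix.trace_smul, Matrix.trace_diagonal,
    SimpleGraph.trace_adjMatrix]
  simp

lemma trace_sq_aalpha_zero {X : Type} [Fintype X] (H : SimpleGraph X) :
    (Aalpha H 0 * Aalpha H 0).trace = ∑ v, (H.degree v : ℝ) := by
  have h0 : Aalpha H 0 = H.adjMatrix ℝ := by
    unfold Aalpha; simp
  rw [h0, Matrix.trace]
  exact Finset.sum_congr rfl fun i _ => H.adjMatrix_mul_self_apply_self i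

lemma root_le_of_regular {V : Type} [Fintype V] [Nonempty V]
    (G : SimpleGraph V) (α : ℝ) (hα1 : α ≤ 1) (r : ℕ)
    (hreg : G.IsRegularOfDegree r) {x : ℝ}
    (hx : (Aalpha G α).charpoly.IsRoot x) : x ≤ (r : ℝ) := by
  classical
  have hroot : (x • (1 : Matrix V V ℝ) - Aalpha G α).det = 0 := by
    rw [← myEval_charpoly]; exact hx
  obtain ⟨v, hv0, hv⟩ := Matrix.exists_mulVec_eq_zero_iff.mpr hroot
  have hMv : (Aalpha G α) *ᵥ v = x • v := by
    rw [Matrix.sub_mulVec, Matrix.smul_mulVec, Matrix.one_mulVec, sub_eq_zero] at hv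
    exact hv.symm
  obtain ⟨i, -, hi⟩ := Finset.exists_max_image Finset.univ (fun j => |v j|) Finset.univ_nonempty
  have hvi : v i ≠ 0 := by
    intro h0
    apply hv0
    funext j
    have h2 := hi j (Finset.mem_univ j)
    rw [h0, abs_zero] at h2
    exact abs_nonpos_iff.mp h2
  have hcomp : x * v i = α * r * v i + (1 - α) * ∑ j ∈ G.neighborFinset i, v j := by
    have h2 := congrFun hMv i
    simp only [Aalpha, Matrix.add_mulVec, Matrix.smul_mulVec, Pi.add_apply,
      Pi.smul_apply, Matrix.mulVec_diagonal, SimpleGraph.adjMatrix_mulVec_apply,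
      smul_eq_mul, hreg i] at h2
    rw [← h2]; ring
  have habs : |x - α * r| * |v i| ≤ (1 - α) * r * |v i| := by
    have h1 : (x - α * r) * v i = (1 - α) * ∑ j ∈ G.neighborFinset i, v j := by
      rw [sub_mul, hcomp]; ring
    have h1a : (0:ℝ) ≤ 1 - α := by linarith
    calc |x - α * r| * |v i| = |(x - α * r) * v i| := (abs_mul _ _).symm
      _ = (1 - α) * |∑ j ∈ G.neighborFinset i, v j| := by
          rw [h1, abs_mul, abs_of_nonneg h1a]
      _ ≤ (1 - α) * ∑ j ∈ G.neighborFinset i, |v j| :=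
          mul_le_mul_of_nonneg_left (Finset.abs_sum_le_sum_abs _ _) h1a
      _ ≤ (1 - α) * ∑ _j ∈ G.neighborFinset i, |v i| :=
          mul_le_mul_of_nonneg_left
            (Finset.sum_le_sum fun j _ => hi j (Finset.mem_univ j)) h1a
      _ = (1 - α) * r * |v i| := by
          rw [Finset.sum_const, SimpleGraph.card_neighborFinset_eq_degree, hreg i]
          simp [mul_assoc]
  have hvipos : 0 < |v i| := abs_pos.mpr hvi
  have h3 : |x - α * r| ≤ (1 - α) * r := le_of_mul_le_mul_right habs hvipos
  have h4 : x - α * r ≤ (1 - α) * r := le_trans (le_abs_self _) h3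
  nlinarith [h4]

theorem regular_of_Aalpha_cospectral_regular
    {V W : Type} [Fintype V] [Fintype W]
    (G : SimpleGraph V) (G' : SimpleGraph W)
    (α : ℝ) (hα0 : 0 ≤ α) (hα1 : α ≤ 1)
    (h : (Aalpha G α).charpoly = (Aalpha G' α).charpoly)
    (r : ℕ) (hreg : G.IsRegularOfDegree r) :
    G'.IsRegularOfDegree r := by
  classical
  have hcard : Fintype.card W = Fintype.card V := by
    have h2 := congrArg Polynomial.natDegree h
    rw [Matrix.charpoly_natDegree_eq_dim, Matrix.charpoly_natDegree_eq_dim] at h2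
    exact h2.symm
  rcases isEmpty_or_nonempty W with hW | hW
  · exact fun v => (hW.false v).elim
  have hV : Nonempty V := Fintype.card_pos_iff.mp (hcard ▸ Fintype.card_pos)
  have hMh := aalpha_isHermitian G α
  have hM'h := aalpha_isHermitian G' α
  have hcpM : (Aalpha G α).charpoly = ∏ j, (X - C (hMh.eigenvalues j)) :=
    myCharpoly_hermitian _ hMh
  have hcpM' : (Aalpha G' α).charpoly = ∏ i, (X - C (hM'h.eigenvalues i)) :=
    myCharpoly_hermitian _ hM'h
  -- every eigenvalue of A_α(G') is at most r
  have he_le : ∀ i, hM'h.eigenvalues i ≤ (r : ℝ) := by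
    intro i
    apply root_le_of_regular G α hα1 r hreg
    rw [Polynomial.IsRoot, h, hcpM', Polynomial.eval_prod]
    exact Finset.prod_eq_zero (Finset.mem_univ i) (by simp)
  -- the eigenvalue multisets agree
  have hmult : Multiset.map hMh.eigenvalues Finset.univ.val
      = Multiset.map hM'h.eigenvalues Finset.univ.val := by
    have h1 : ((Multiset.map hMh.eigenvalues Finset.univ.val).map (fun a => X - C a)).prod
        = ((Multiset.map hM'h.eigenvalues Finset.univ.val).map (fun a => X - C a)).prod := by
      rw [Multiset.map_map, Multiset.map_map, ← Finset.prod_eq_multiset_prod,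
        ← Finset.prod_eq_multiset_prod]
      simp only [Function.comp_apply]
      rw [← hcpM, ← hcpM']
      exact h
    have h2 := congrArg Polynomial.roots h1
    rwa [Polynomial.roots_multiset_prod_X_sub_C, Polynomial.roots_multiset_prod_X_sub_C] at h2
  have hsumdeg : ∑ v, (G.degree v : ℝ) = (Fintype.card V : ℝ) * r := by
    rw [Finset.sum_congr rfl (fun v _ => by rw [hreg v]), Finset.sum_const]
    simp [mul_comm]
  -- the degree sum of G'
  have hsum' : ∑ v, (G'.degree v : ℝ) = (Fintype.card V : ℝ) * r := by
    rcases eq_or_ne α 0 with h0 | h0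
    · subst h0
      have h2 : ∑ i, hM'h.eigenvalues i ^ 2 = ∑ j, hMh.eigenvalues j ^ 2 := by
        have h3 := congrArg (fun s : Multiset ℝ => (s.map (fun x : ℝ => x ^ 2)).sum) hmult
        simp only [Multiset.map_map, Function.comp_apply] at h3
        rw [Finset.sum_eq_multiset_sum, Finset.sum_eq_multiset_sum]
        exact h3.symm
      calc ∑ v, (G'.degree v : ℝ) = (Aalpha G' 0 * Aalpha G' 0).trace :=
            (trace_sq_aalpha_zero G').symm
        _ = ∑ i, hM'h.eigenvalues i ^ 2 := myTrace_sq_hermitian _ hM'h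
        _ = ∑ j, hMh.eigenvalues j ^ 2 := h2
        _ = (Aalpha G 0 * Aalpha G 0).trace := (myTrace_sq_hermitian _ hMh).symm
        _ = ∑ v, (G.degree v : ℝ) := trace_sq_aalpha_zero G
        _ = _ := hsumdeg
    · have ht : (Aalpha G α).trace = (Aalpha G' α).trace := by
        rw [Matrix.trace_eq_neg_charpoly_coeff, Matrix.trace_eq_neg_charpoly_coeff, h, hcard]
      rw [trace_aalpha, trace_aalpha, hsumdeg] at ht
      exact (mul_left_cancel₀ h0 ht).symm
  -- Rayleigh equality argument
  set U : Matrix W W ℝ := (hM'h.eigenvectorUnitary : Matrix W W ℝ) with hU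
  have h1 : U * star U = 1 := Matrix.mem_unitaryGroup_iff.mp hM'h.eigenvectorUnitary.2
  have hUt : star U = Uᵀ := by
    rw [Matrix.star_eq_conjTranspose, Matrix.conjTranspose_eq_transpose_of_trivial]
  have hofreal : (RCLike.ofReal ∘ hM'h.eigenvalues : W → ℝ) = hM'h.eigenvalues := by
    ext i; simp
  have hspec : Aalpha G' α = U * Matrix.diagonal hM'h.eigenvalues * star U := by
    conv_lhs => rw [hM'h.spectral_theorem, Unitary.conjStarAlgAut_apply]
    rw [hofreal]
  set ones : W → ℝ := fun _ => 1 with hones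
  set c : W → ℝ := Uᵀ *ᵥ ones with hc
  have hMones : Aalpha G' α *ᵥ ones = U *ᵥ (Matrix.diagonal hM'h.eigenvalues *ᵥ c) := by
    conv_lhs => rw [hspec, hUt]
    rw [hc, Matrix.mulVec_mulVec, Matrix.mulVec_mulVec]
  have hUc : U *ᵥ c = ones := by
    rw [hc, Matrix.mulVec_mulVec, ← hUt, h1, Matrix.one_mulVec]
  have hcvec : c = ones ᵥ* U := by rw [hc, Matrix.mulVec_transpose]
  have hcc : c ⬝ᵥ c = (Fintype.card W : ℝ) := by
    nth_rewrite 1 [hcvec]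
    rw [← Matrix.dotProduct_mulVec, hUc, hones]
    simp [dotProduct]
  have hray : ones ⬝ᵥ (Aalpha G' α *ᵥ ones) = ∑ v, (G'.degree v : ℝ) := by
    unfold dotProduct
    rw [Finset.sum_congr rfl (fun v _ => by rw [hones, one_mul, sum_row_aalpha])]
  have hray2 : ones ⬝ᵥ (Aalpha G' α *ᵥ ones) = ∑ i, hM'h.eigenvalues i * c i ^ 2 := by
    rw [hMones, Matrix.dotProduct_mulVec, ← Matrix.mulVec_transpose, ← hc]
    unfold dotProduct
    exact Finset.sum_congr rfl fun i _ => by rw [Matrix.mulVec_diagonal]; ring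
  have hkey : ∑ i, ((r : ℝ) - hM'h.eigenvalues i) * c i ^ 2 = 0 := by
    have h5 : ∑ i, ((r : ℝ) - hM'h.eigenvalues i) * c i ^ 2
        = (r : ℝ) * (c ⬝ᵥ c) - ∑ i, hM'h.eigenvalues i * c i ^ 2 := by
      unfold dotProduct
      rw [Finset.mul_sum, ← Finset.sum_sub_distrib]
      exact Finset.sum_congr rfl fun i _ => by ring
    rw [h5, hcc, ← hray2, hray, hsum', hcard]
    ring
  have hterm : ∀ i, ((r : ℝ) - hM'h.eigenvalues i) * c i ^ 2 = 0 := fun i =>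
    (Finset.sum_eq_zero_iff_of_nonneg (fun i _ =>
      mul_nonneg (by linarith [he_le i]) (sq_nonneg _))).mp hkey i (Finset.mem_univ i)
  have hDc : Matrix.diagonal hM'h.eigenvalues *ᵥ c = (r : ℝ) • c := by
    funext i
    rw [Matrix.mulVec_diagonal]
    rcases mul_eq_zero.mp (hterm i) with h4 | h4
    · have h6 : hM'h.eigenvalues i = (r : ℝ) := by linarith [sub_eq_zero.mp h4]
      simp [h6]
    · have h6 : c i = 0 := by
        have := sq_eq_zero_iff.mp h4
        exact this
      simp [h6]
  have hfinal : Aalpha G' α *ᵥ ones = (r : ℝ) • ones := by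
    rw [hMones, hDc, Matrix.mulVec_smul, hUc]
  intro v
  have h7 := congrFun hfinal v
  rw [sum_row_aalpha] at h7
  have h8 : (G'.degree v : ℝ) = (r : ℝ) := by
    rw [h7]; simp [hones]
  exact_mod_cast h8
end

section
/- For every real α with 0 ≤ α < 1 and every n ≥ 1, the path P_n is determined by its A_α-spectrum: every finite simple graph whose A_α matrix has the same characteristic polynomial as that of P_n is isomorphic to P_n. -/
open SimpleGraph Matrix Finset

attribute [local instance] Classical.propDecidable

open Polynomial


section Spectral
variable {V : Type} [Fintype V] [DecidableEq V]

lemma charmatrix_eq (M : Matrix V V ℝ) :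
    charmatrix M = (X : ℝ[X]) • (1 : Matrix V V ℝ[X]) - M.map C := by
  ext i j
  by_cases h : i = j
  · subst h; simp [charmatrix_apply_eq, Matrix.one_apply, Matrix.map_apply]
  · simp [charmatrix_apply_ne _ _ _ h, Matrix.one_apply_ne h, Matrix.map_apply]

lemma charpoly_conj {U B Vm : Matrix V V ℝ} (h1 : U * Vm = 1) :
    (U * B * Vm).charpoly = B.charpoly := by
  have hmap1 : U.map (C : ℝ →+* ℝ[X]) * Vm.map C = 1 := by
    rw [← Matrix.map_mul, h1, Matrix.map_one _ (map_zero C) (map_one C)]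
  have key : charmatrix (U * B * Vm)
      = U.map (C : ℝ →+* ℝ[X]) * charmatrix B * Vm.map C := by
    rw [charmatrix_eq, charmatrix_eq, mul_sub, sub_mul]
    congr 1
    · rw [mul_smul_comm, smul_mul_assoc, mul_one, hmap1]
    · rw [Matrix.map_mul, Matrix.map_mul]
  rw [Matrix.charpoly, key, det_mul, det_mul, Matrix.charpoly]
  have : det (U.map (C : ℝ →+* ℝ[X])) * det (Vm.map C) = 1 := by
    rw [← det_mul, hmap1, det_one]
  ring_nf
  calc det (U.map (C : ℝ →+* ℝ[X])) * det (charmatrix B) * det (Vm.map C)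
      = det (charmatrix B) * (det (U.map (C : ℝ →+* ℝ[X])) * det (Vm.map C)) := by ring
    _ = det (charmatrix B) := by rw [this, mul_one]

lemma charpoly_diagonal (d : V → ℝ) :
    (diagonal d).charpoly = ∏ i : V, (X - C (d i)) := by
  have : charmatrix (diagonal d) = diagonal (fun i => (X : ℝ[X]) - C (d i)) := by
    ext i j
    by_cases h : i = j
    · subst h; simp [charmatrix_apply_eq]
    · simp [charmatrix_apply_ne _ _ _ h, diagonal_apply_ne _ h, diagonal_apply_ne d h]
  rw [Matrix.charpoly, this, det_diagonal]

lemma herm_charpoly {A : Matrix V V ℝ} (hA : A.IsHermitian) :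
    A.charpoly = ∏ i : V, (X - C (hA.eigenvalues i)) := by
  have hU := hA.spectral_theorem
  rw [RCLike.ofReal_real_eq_id, Unitary.conjStarAlgAut_apply] at hU
  have h1 : (hA.eigenvectorUnitary : Matrix V V ℝ) * (star hA.eigenvectorUnitary : Matrix V V ℝ) = 1 := by
    exact_mod_cast Unitary.coe_mul_star_self hA.eigenvectorUnitary
  calc A.charpoly
      = ((hA.eigenvectorUnitary : Matrix V V ℝ) * diagonal (id ∘ hA.eigenvalues) *
          (star hA.eigenvectorUnitary : Matrix V V ℝ)).charpoly := by rw [← hU]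
    _ = (diagonal (id ∘ hA.eigenvalues)).charpoly := charpoly_conj h1
    _ = ∏ i : V, (X - C (hA.eigenvalues i)) := by
        rw [_root_.charpoly_diagonal]; rfl

lemma herm_trace_pow {A : Matrix V V ℝ} (hA : A.IsHermitian) (k : ℕ) :
    (A ^ k).trace = ∑ i : V, hA.eigenvalues i ^ k := by
  have hU := hA.spectral_theorem
  rw [RCLike.ofReal_real_eq_id, Unitary.conjStarAlgAut_apply] at hU
  set U : Matrix V V ℝ := (hA.eigenvectorUnitary : Matrix V V ℝ) with hUdef
  set Vm : Matrix V V ℝ := (star hA.eigenvectorUnitary : Matrix V V ℝ) with hVdef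
  have h2 : Vm * U = 1 := by
    exact_mod_cast Unitary.coe_star_mul_self hA.eigenvectorUnitary
  set D : Matrix V V ℝ := diagonal (id ∘ hA.eigenvalues) with hD
  have h1 : U * Vm = 1 := by
    exact_mod_cast Unitary.coe_mul_star_self hA.eigenvectorUnitary
  have hpow : ∀ k : ℕ, A ^ k = U * D ^ k * Vm := by
    intro k
    induction k with
    | zero => rw [pow_zero, pow_zero, Matrix.mul_one, h1]
    | succ k ih =>
      have e1 : U * D ^ k * Vm * (U * D * Vm) = U * D ^ k * (Vm * U) * (D * Vm) := by
        simp only [Matrix.mul_assoc]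
      rw [pow_succ, ih, hU, e1, h2, Matrix.mul_one]
      simp only [pow_succ, Matrix.mul_assoc]
  rw [hpow k, Matrix.trace_mul_cycle, h2, Matrix.one_mul, hD,
    diagonal_pow, trace_diagonal]
  simp

lemma herm_trace_pow_eq {W : Type} [Fintype W] [DecidableEq W]
    {A : Matrix V V ℝ} {B : Matrix W W ℝ} (hA : A.IsHermitian) (hB : B.IsHermitian)
    (h : A.charpoly = B.charpoly) (k : ℕ) : (A ^ k).trace = (B ^ k).trace := by
  have hroots : (Finset.univ.val.map hA.eigenvalues) = (Finset.univ.val.map hB.eigenvalues) := by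
    have := congrArg Polynomial.roots h
    rw [herm_charpoly hA, herm_charpoly hB] at this
    have hcomp : ∀ {ι : Type} [Fintype ι] (f : ι → ℝ),
        (Multiset.map (fun i => (X : ℝ[X]) - C (f i)) Finset.univ.val)
          = Multiset.map (fun a => X - C a) (Multiset.map f Finset.univ.val) := by
      intro ι _ f; rw [Multiset.map_map]; rfl
    rw [Finset.prod_eq_multiset_prod, Finset.prod_eq_multiset_prod,
      hcomp hA.eigenvalues, hcomp hB.eigenvalues,
      roots_multiset_prod_X_sub_C, roots_multiset_prod_X_sub_C] at this
    exact this
  rw [herm_trace_pow hA k, herm_trace_pow hB k]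
  have hs : ∀ {ι : Type} [Fintype ι] (f : ι → ℝ),
      ∑ i : ι, f i ^ k = ((Finset.univ.val.map f).map (· ^ k)).sum := by
    intro ι _ f
    rw [Multiset.map_map]
    rfl
  rw [hs, hs, hroots]

end Spectral



section Traces
variable {V : Type} [Fintype V] (G : SimpleGraph V) (α : ℝ)

lemma aalpha_isHermitian_s5 : (Aalpha G α).IsHermitian := by
  unfold Matrix.IsHermitian
  rw [show (Aalpha G α)ᴴ = (Aalpha G α)ᵀ from rfl]
  unfold Aalpha
  rw [transpose_add, transpose_smul, transpose_smul, diagonal_transpose,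
    transpose_adjMatrix]

lemma adj_row_sum (i : V) : ∑ j : V, G.adjMatrix ℝ i j = (G.degree i : ℝ) := by
  have : ∑ j : V, G.adjMatrix ℝ i j
      = ((Finset.univ.filter (fun j => G.Adj i j)).card : ℝ) := by
    simp [adjMatrix_apply, sum_boole]
  rw [this, ← neighborFinset_eq_filter, card_neighborFinset_eq_degree]

lemma adj_col_sum (k : V) : ∑ i : V, G.adjMatrix ℝ i k = (G.degree k : ℝ) := by
  rw [← adj_row_sum G k]
  apply Finset.sum_congr rfl
  intro i _
  simp [adjMatrix_apply, G.adj_comm]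

lemma aalpha_trace : (Aalpha G α).trace = α * ∑ v : V, (G.degree v : ℝ) := by
  unfold Aalpha
  rw [trace_add, trace_smul, trace_smul, trace_diagonal, trace_adjMatrix]
  simp

lemma aalpha_sq_trace : ((Aalpha G α) ^ 2).trace
    = α ^ 2 * (∑ v : V, (G.degree v : ℝ) ^ 2)
      + (1 - α) ^ 2 * ∑ v : V, (G.degree v : ℝ) := by
  have hDA : ((Matrix.diagonal (fun v => (G.degree v : ℝ))) * G.adjMatrix ℝ).trace = 0 := by
    rw [Matrix.trace]
    apply Finset.sum_eq_zero
    intro i _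
    show ((Matrix.diagonal (fun v => (G.degree v : ℝ))) * G.adjMatrix ℝ) i i = 0
    rw [Matrix.diagonal_mul]
    simp [adjMatrix_apply]
  have hAD : ((G.adjMatrix ℝ) * Matrix.diagonal (fun v => (G.degree v : ℝ))).trace = 0 := by
    rw [trace_mul_comm]; exact hDA
  have hDD : ((Matrix.diagonal (fun v => (G.degree v : ℝ)))
      * Matrix.diagonal (fun v => (G.degree v : ℝ))).trace = ∑ v : V, (G.degree v : ℝ) ^ 2 := by
    rw [diagonal_mul_diagonal, trace_diagonal]
    simp [pow_two]
  have hAA : ((G.adjMatrix ℝ) * G.adjMatrix ℝ).trace = ∑ v : V, (G.degree v : ℝ) := by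
    rw [Matrix.trace]
    apply Finset.sum_congr rfl
    intro i _
    simpa using G.adjMatrix_mul_self_apply_self (α := ℝ) i
  unfold Aalpha
  rw [pow_two, add_mul, mul_add, mul_add, smul_mul_smul_comm, smul_mul_smul_comm,
    smul_mul_smul_comm, smul_mul_smul_comm]
  rw [trace_add, trace_add, trace_add, trace_smul, trace_smul, trace_smul, trace_smul,
    hDA, hAD, hDD, hAA]
  simp only [smul_zero, smul_eq_mul, add_zero, zero_add]
  ring

lemma common_card (i j : V) : ((G.adjMatrix ℝ) * G.adjMatrix ℝ) i j
    = ((Finset.univ.filter (fun k => G.Adj i k ∧ G.Adj k j)).card : ℝ) := by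
  rw [Matrix.mul_apply]
  rw [Finset.sum_congr rfl (fun k _ => show G.adjMatrix ℝ i k * G.adjMatrix ℝ k j
    = if G.Adj i k ∧ G.Adj k j then 1 else 0 by
      by_cases h1 : G.Adj i k <;> by_cases h2 : G.Adj k j <;>
        simp [adjMatrix_apply, h1, h2])]
  rw [Finset.sum_boole]

lemma sum_sum_adj_sq : ∑ i : V, ∑ j : V, ((G.adjMatrix ℝ) * G.adjMatrix ℝ) i j
    = ∑ v : V, (G.degree v : ℝ) ^ 2 := by
  have h1 : ∀ i j : V, ((G.adjMatrix ℝ) * G.adjMatrix ℝ) i j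
      = ∑ k : V, G.adjMatrix ℝ i k * G.adjMatrix ℝ k j := fun i j => Matrix.mul_apply
  calc ∑ i : V, ∑ j : V, ((G.adjMatrix ℝ) * G.adjMatrix ℝ) i j
      = ∑ i : V, ∑ k : V, G.adjMatrix ℝ i k * (G.degree k : ℝ) := by
        refine Finset.sum_congr rfl fun i _ => ?_
        simp_rw [h1]
        rw [Finset.sum_comm]
        refine Finset.sum_congr rfl fun k _ => ?_
        rw [← Finset.mul_sum, adj_row_sum G k]
    _ = ∑ k : V, (∑ i : V, G.adjMatrix ℝ i k) * (G.degree k : ℝ) := by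
        rw [Finset.sum_comm]
        exact Finset.sum_congr rfl fun k _ => (Finset.sum_mul _ _ _).symm
    _ = ∑ v : V, (G.degree v : ℝ) ^ 2 := by
        refine Finset.sum_congr rfl fun k _ => ?_
        rw [adj_col_sum G k, pow_two]

lemma adjsq_symm (i j : V) :
    ((G.adjMatrix ℝ) * G.adjMatrix ℝ) j i = ((G.adjMatrix ℝ) * G.adjMatrix ℝ) i j := by
  have h : ((G.adjMatrix ℝ) * G.adjMatrix ℝ)ᵀ = (G.adjMatrix ℝ) * G.adjMatrix ℝ := by
    rw [transpose_mul, transpose_adjMatrix]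
  conv_rhs => rw [← h]
  rfl

lemma trace_pow4 : ((G.adjMatrix ℝ) ^ 4).trace
    = ∑ i : V, ∑ j : V, (((G.adjMatrix ℝ) * G.adjMatrix ℝ) i j) ^ 2 := by
  have h4 : (G.adjMatrix ℝ) ^ 4 = ((G.adjMatrix ℝ) * G.adjMatrix ℝ)
      * ((G.adjMatrix ℝ) * G.adjMatrix ℝ) := by
    rw [show (4:ℕ) = 2 + 2 from rfl, pow_add, pow_two]
  rw [h4, Matrix.trace]
  refine Finset.sum_congr rfl fun i _ => ?_
  show (((G.adjMatrix ℝ) * G.adjMatrix ℝ) * ((G.adjMatrix ℝ) * G.adjMatrix ℝ)) i i = _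
  rw [Matrix.mul_apply]
  refine Finset.sum_congr rfl fun j _ => ?_
  rw [adjsq_symm, pow_two]

end Traces



section Eigen
variable {V : Type} [Fintype V] [DecidableEq V]

lemma eval_charpoly' (M : Matrix V V ℝ) (t : ℝ) :
    M.charpoly.eval t = (t • (1 : Matrix V V ℝ) - M).det := by
  rw [Matrix.charpoly]
  have h1 : Polynomial.eval t (charmatrix M).det
      = ((Polynomial.evalRingHom t).mapMatrix (charmatrix M)).det := by
    rw [← Polynomial.coe_evalRingHom]
    exact RingHom.map_det _ _
  rw [h1, RingHom.mapMatrix_apply]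
  congr 1
  ext i j
  by_cases h : i = j
  · subst h
    simp [charmatrix_apply_eq, Matrix.one_apply, Matrix.map_apply]
  · simp [charmatrix_apply_ne _ _ _ h, Matrix.one_apply_ne h, Matrix.map_apply]

lemma root_iff_kernel (M : Matrix V V ℝ) (t : ℝ) :
    M.charpoly.IsRoot t ↔ ∃ x : V → ℝ, x ≠ 0 ∧ M.mulVec x = t • x := by
  rw [Polynomial.IsRoot, eval_charpoly', ← Matrix.exists_mulVec_eq_zero_iff]
  constructor
  · rintro ⟨v, hv, hv2⟩
    refine ⟨v, hv, ?_⟩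
    rw [sub_mulVec, smul_mulVec, one_mulVec] at hv2
    have := sub_eq_zero.mp hv2
    exact this.symm
  · rintro ⟨x, hx, hx2⟩
    refine ⟨x, hx, ?_⟩
    rw [sub_mulVec, smul_mulVec, one_mulVec, hx2, sub_self]

omit [DecidableEq V] in
lemma aalpha_mulVec (G : SimpleGraph V) (α : ℝ) (x : V → ℝ) (i : V) :
    (Aalpha G α).mulVec x i
      = α * (G.degree i : ℝ) * x i + (1 - α) * ∑ j ∈ G.neighborFinset i, x j := by
  unfold Aalpha
  rw [add_mulVec, smul_mulVec, smul_mulVec]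
  simp only [Pi.add_apply, Pi.smul_apply, smul_eq_mul]
  rw [mulVec_diagonal, adjMatrix_mulVec_apply]
  ring

lemma closed_set_root (G : SimpleGraph V) (α : ℝ) (S : Finset V) (hne : S.Nonempty)
    (hdeg : ∀ w ∈ S, G.degree w = 2) (hcl : ∀ w ∈ S, ∀ y, G.Adj w y → y ∈ S) :
    (Aalpha G α).charpoly.IsRoot 2 := by
  rw [root_iff_kernel]
  refine ⟨fun w => if w ∈ S then 1 else 0, ?_, ?_⟩
  · obtain ⟨w, hw⟩ := hne
    intro h
    have := congrFun h w
    simp [hw] at this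
  · funext i
    rw [aalpha_mulVec]
    by_cases hi : i ∈ S
    · have hsub : G.neighborFinset i ⊆ S := by
        intro j hj
        exact hcl i hi j ((mem_neighborFinset _ _ _).mp hj)
      have hsum : ∑ j ∈ G.neighborFinset i, (if j ∈ S then (1:ℝ) else 0) = 2 := by
        rw [Finset.sum_congr rfl (fun j hj => if_pos (hsub hj))]
        rw [Finset.sum_const, card_neighborFinset_eq_degree, hdeg i hi]
        norm_num
      simp only [hi, if_pos, Pi.smul_apply, smul_eq_mul]
      rw [hsum, hdeg i hi]
      push_cast
      ring
    · have hsum : ∑ j ∈ G.neighborFinset i, (if j ∈ S then (1:ℝ) else 0) = 0 := by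
        apply Finset.sum_eq_zero
        intro j hj
        rw [if_neg]
        intro hjS
        exact hi (hcl j hjS i ((mem_neighborFinset _ _ _).mp hj).symm)
      simp only [hi, if_neg, Pi.smul_apply, smul_eq_mul]
      rw [hsum]
      norm_num

end Eigen

section PathLemmas
variable {n : ℕ}

lemma path_deg_0 (hn : 2 ≤ n) : (pathGraph n).degree ⟨0, by omega⟩ = 1 := by
  rw [← card_neighborFinset_eq_degree]
  have : (pathGraph n).neighborFinset ⟨0, by omega⟩ = {(⟨1, by omega⟩ : Fin n)} := by
    ext j
    have hj := j.isLt
    simp only [mem_neighborFinset, pathGraph_adj, Finset.mem_singleton, Fin.ext_iff]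
    omega
  rw [this, Finset.card_singleton]

lemma path_deg_last (hn : 2 ≤ n) : (pathGraph n).degree ⟨n - 1, by omega⟩ = 1 := by
  rw [← card_neighborFinset_eq_degree]
  have : (pathGraph n).neighborFinset ⟨n - 1, by omega⟩ = {(⟨n - 2, by omega⟩ : Fin n)} := by
    ext j
    have hj := j.isLt
    simp only [mem_neighborFinset, pathGraph_adj, Finset.mem_singleton, Fin.ext_iff]
    omega
  rw [this, Finset.card_singleton]

lemma path_deg_mid (hn : 2 ≤ n) (i : Fin n) (h0 : 0 < i.val) (h1 : i.val < n - 1) :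
    (pathGraph n).degree i = 2 := by
  rw [← card_neighborFinset_eq_degree]
  have hi := i.isLt
  have : (pathGraph n).neighborFinset i
      = {(⟨i.val - 1, by omega⟩ : Fin n), (⟨i.val + 1, by omega⟩ : Fin n)} := by
    ext j
    have hj := j.isLt
    simp only [mem_neighborFinset, pathGraph_adj, Finset.mem_insert, Finset.mem_singleton,
      Fin.ext_iff]
    omega
  rw [this, Finset.card_insert_of_notMem, Finset.card_singleton]
  simp only [Finset.mem_singleton, Fin.ext_iff]
  omega

lemma path_degree (hn : 2 ≤ n) (i : Fin n) :
    (pathGraph n).degree i = if i.val = 0 ∨ i.val = n - 1 then 1 else 2 := by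
  have hi := i.isLt
  by_cases h0 : i.val = 0
  · rw [if_pos (Or.inl h0)]
    have : i = ⟨0, by omega⟩ := Fin.ext h0
    rw [this]; exact path_deg_0 hn
  · by_cases h1 : i.val = n - 1
    · rw [if_pos (Or.inr h1)]
      have : i = ⟨n - 1, by omega⟩ := Fin.ext h1
      rw [this]; exact path_deg_last hn
    · rw [if_neg (by tauto)]
      exact path_deg_mid hn i (by omega) (by omega)

lemma path_deg_le (hn : 2 ≤ n) (i : Fin n) : (pathGraph n).degree i ≤ 2 := by
  rw [path_degree hn i]; split <;> omega

lemma filter_val_eq (m : ℕ) (hm : m < n) :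
    (Finset.univ.filter (fun i : Fin n => i.val = m)) = {(⟨m, hm⟩ : Fin n)} := by
  ext j
  simp [Fin.ext_iff]

lemma path_deg_sum (hn : 2 ≤ n) :
    ∑ i : Fin n, ((pathGraph n).degree i : ℝ) = 2 * n - 2 := by
  have hpt : ∀ i : Fin n, ((pathGraph n).degree i : ℝ)
      = 2 - ((if i.val = 0 then (1:ℝ) else 0) + (if i.val = n - 1 then (1:ℝ) else 0)) := by
    intro i
    rw [path_degree hn i]
    by_cases h0 : i.val = 0
    · have h1 : ¬ i.val = n - 1 := by omega
      norm_num [h0, h1, show ¬ ((0:ℕ) = n - 1) by omega]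
    · by_cases h1 : i.val = n - 1
      · norm_num [h0, h1, show ¬ (n - 1 = 0) by omega]
      · norm_num [h0, h1]
  rw [Finset.sum_congr rfl (fun i _ => hpt i), Finset.sum_sub_distrib, Finset.sum_add_distrib]
  rw [Finset.sum_boole, Finset.sum_boole, filter_val_eq 0 (by omega), filter_val_eq (n-1) (by omega)]
  rw [Finset.sum_const, Finset.card_univ, Fintype.card_fin]
  simp only [Finset.card_singleton, Nat.cast_one, Finset.sum_const, Finset.card_univ,
    Fintype.card_fin, nsmul_eq_mul, smul_eq_mul]
  push_cast
  ring

lemma path_deg_sq_sum (hn : 2 ≤ n) :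
    ∑ i : Fin n, ((pathGraph n).degree i : ℝ) ^ 2 = 4 * n - 6 := by
  have hpt : ∀ i : Fin n, ((pathGraph n).degree i : ℝ) ^ 2
      = 4 - 3 * ((if i.val = 0 then (1:ℝ) else 0) + (if i.val = n - 1 then (1:ℝ) else 0)) := by
    intro i
    rw [path_degree hn i]
    by_cases h0 : i.val = 0
    · have h1 : ¬ i.val = n - 1 := by omega
      norm_num [h0, h1, show ¬ ((0:ℕ) = n - 1) by omega]
    · by_cases h1 : i.val = n - 1
      · norm_num [h0, h1, show ¬ (n - 1 = 0) by omega]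
      · norm_num [h0, h1]
  rw [Finset.sum_congr rfl (fun i _ => hpt i), Finset.sum_sub_distrib]
  rw [← Finset.mul_sum, Finset.sum_add_distrib]
  rw [Finset.sum_boole, Finset.sum_boole, filter_val_eq 0 (by omega), filter_val_eq (n-1) (by omega)]
  simp only [Finset.card_singleton, Nat.cast_one, Finset.sum_const, Finset.card_univ,
    Fintype.card_fin, nsmul_eq_mul, smul_eq_mul]
  push_cast
  ring

lemma path_common (hn : 2 ≤ n) (i j : Fin n) (hij : i ≠ j) :
    (Finset.univ.filter (fun k => (pathGraph n).Adj i k ∧ (pathGraph n).Adj k j)).card ≤ 1 := by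
  rw [Finset.card_le_one]
  intro a ha b hb
  simp only [Finset.mem_filter, pathGraph_adj] at ha hb
  have := a.isLt; have := b.isLt; have := i.isLt; have := j.isLt
  have hij' : i.val ≠ j.val := fun h => hij (Fin.ext h)
  rw [Fin.ext_iff]
  omega

lemma path_not_root (hn : 2 ≤ n) {α : ℝ} (hα1 : α < 1) :
    ¬ (Aalpha (pathGraph n) α).charpoly.IsRoot 2 := by
  intro hroot
  rw [root_iff_kernel] at hroot
  obtain ⟨x, hx0, hx⟩ := hroot
  have hne : (Finset.univ : Finset (Fin n)).Nonempty := ⟨⟨0, by omega⟩, Finset.mem_univ _⟩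
  obtain ⟨i0, -, hi0⟩ := Finset.exists_max_image Finset.univ (fun i => |x i|) hne
  -- replace x by s with s i0 = max |x| > 0
  have hxs : ∀ (s : Fin n → ℝ), (Aalpha (pathGraph n)  α).mulVec s = (2:ℝ) • s →
      (∀ i, s i ≤ s i0) → 0 < s i0 → False := by
    intro s hs hmax hpos
    set T : Set (Fin n) := {i | s i = s i0} with hT
    have hstep : ∀ i ∈ T, 2 ≤ (pathGraph n).degree i ∧ ∀ j, (pathGraph n).Adj i j → j ∈ T := by
      intro i hiT
      have hrow : α * ((pathGraph n).degree i : ℝ) * s i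
          + (1 - α) * ∑ j ∈ (pathGraph n).neighborFinset i, s j = 2 * s i := by
        have := congrFun hs i
        rw [aalpha_mulVec] at this
        simpa using this
      have hsumle : ∑ j ∈ (pathGraph n).neighborFinset i, s j
          ≤ ((pathGraph n).degree i : ℝ) * s i0 := by
        calc ∑ j ∈ (pathGraph n).neighborFinset i, s j
            ≤ ∑ _j ∈ (pathGraph n).neighborFinset i, s i0 :=
              Finset.sum_le_sum (fun j _ => hmax j)
          _ = ((pathGraph n).degree i : ℝ) * s i0 := by
              rw [Finset.sum_const, card_neighborFinset_eq_degree, nsmul_eq_mul]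
      have hsi : s i = s i0 := hiT
      have hd2 : 2 ≤ (pathGraph n).degree i := by
        by_contra hlt
        push_neg at hlt
        have hd : ((pathGraph n).degree i : ℝ) < 2 := by exact_mod_cast hlt
        have : 2 * s i0 < 2 * s i0 := by
          calc 2 * s i0 = 2 * s i := by rw [hsi]
            _ = α * ((pathGraph n).degree i : ℝ) * s i
                + (1 - α) * ∑ j ∈ (pathGraph n).neighborFinset i, s j := hrow.symm
            _ ≤ α * ((pathGraph n).degree i : ℝ) * s i0
                + (1 - α) * (((pathGraph n).degree i : ℝ) * s i0) := by
                rw [hsi]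
                have := mul_le_mul_of_nonneg_left hsumle (by linarith : (0:ℝ) ≤ 1 - α)
                linarith
            _ = ((pathGraph n).degree i : ℝ) * s i0 := by ring
            _ < 2 * s i0 := by
                apply mul_lt_mul_of_pos_right hd hpos
        exact lt_irrefl _ this
      refine ⟨hd2, ?_⟩
      -- degree = 2 exactly
      have hdeq : (pathGraph n).degree i = 2 := le_antisymm (path_deg_le hn i) hd2
      have hsum2 : ∑ j ∈ (pathGraph n).neighborFinset i, s j = 2 * s i0 := by
        have hd : ((pathGraph n).degree i : ℝ) = 2 := by exact_mod_cast hdeq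
        have := hrow
        rw [hsi, hd] at this
        nlinarith [this]
      intro j hj
      -- every neighbor attains the max
      by_contra hjT
      have hjlt : s j < s i0 := lt_of_le_of_ne (hmax j) (by simpa [hT] using hjT)
      have : ∑ j ∈ (pathGraph n).neighborFinset i, s j < 2 * s i0 := by
        have hmem : j ∈ (pathGraph n).neighborFinset i := (mem_neighborFinset _ _ _).mpr hj
        calc ∑ k ∈ (pathGraph n).neighborFinset i, s k
            < ∑ _k ∈ (pathGraph n).neighborFinset i, s i0 := by
              apply Finset.sum_lt_sum (fun k _ => hmax k) ⟨j, hmem, hjlt⟩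
          _ = 2 * s i0 := by
              rw [Finset.sum_const, card_neighborFinset_eq_degree, hdeq]
              norm_num
      linarith [hsum2]
    have hwalk : ∀ (a b : Fin n) (_p : (pathGraph n).Walk a b), a ∈ T → b ∈ T := by
      intro a b p
      induction p with
      | nil => exact id
      | cons h p ih => intro ha; exact ih ((hstep _ ha).2 _ h)
    have h0T : (⟨0, by omega⟩ : Fin n) ∈ T := by
      obtain ⟨p⟩ := (pathGraph_preconnected n) i0 ⟨0, by omega⟩
      exact hwalk _ _ p rfl
    have := (hstep _ h0T).1
    rw [path_deg_0 hn] at this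
    omega
  -- now pick s
  have hpos : 0 < |x i0| := by
    rcases Function.ne_iff.mp hx0 with ⟨w, hw⟩
    calc 0 < |x w| := abs_pos.mpr hw
      _ ≤ |x i0| := hi0 w (Finset.mem_univ w)
  rcases le_or_gt 0 (x i0) with h | h
  · refine hxs x hx (fun i => ?_) ?_
    · have h1 : |x i| ≤ |x i0| := hi0 i (Finset.mem_univ i)
      have h2 : |x i0| = x i0 := abs_of_nonneg h
      linarith [le_abs_self (x i)]
    · rw [← abs_of_nonneg h]
      exact hpos
  · have hneg : (Aalpha (pathGraph n) α).mulVec (-x) = (2:ℝ) • (-x) := by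
      rw [mulVec_neg, hx]
      funext i; simp
    refine hxs (-x) hneg (fun i => ?_) ?_
    · have h1 : |x i| ≤ |x i0| := hi0 i (Finset.mem_univ i)
      have h2 : |x i0| = -(x i0) := abs_of_neg h
      have h3 : -|x i| ≤ x i := neg_abs_le (x i)
      simp only [Pi.neg_apply]
      linarith
    · have h2 : |x i0| = -(x i0) := abs_of_neg h
      simp only [Pi.neg_apply]
      linarith

end PathLemmas



section T4
variable {V : Type} [Fintype V] (G : SimpleGraph V)


lemma adjsq_diag (i : V) : ((G.adjMatrix ℝ) * G.adjMatrix ℝ) i i = (G.degree i : ℝ) := by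
  simpa using G.adjMatrix_mul_self_apply_self (α := ℝ) i

lemma tr4_lower :
    2 * (∑ v : V, (G.degree v : ℝ) ^ 2) - (∑ v : V, (G.degree v : ℝ))
      ≤ ((G.adjMatrix ℝ) ^ 4).trace := by
  rw [trace_pow4]
  have key : ∀ i : V, ∑ j : V, ((G.adjMatrix ℝ * G.adjMatrix ℝ) i j) ^ 2
      ≥ (G.degree i : ℝ)^2 + ((∑ j : V, (G.adjMatrix ℝ * G.adjMatrix ℝ) i j) - (G.degree i : ℝ)) := by
    intro i
    have hdecomp : ∀ (f : V → ℝ), ∑ j : V, f j = f i + ∑ j ∈ Finset.univ.erase i, f j := by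
      intro f
      rw [Finset.add_sum_erase _ f (Finset.mem_univ i)]
    rw [hdecomp (fun j => ((G.adjMatrix ℝ * G.adjMatrix ℝ) i j) ^ 2),
        hdecomp (fun j => (G.adjMatrix ℝ * G.adjMatrix ℝ) i j)]
    simp only [adjsq_diag]
    have hterm : ∀ j ∈ Finset.univ.erase i,
        (G.adjMatrix ℝ * G.adjMatrix ℝ) i j ≤ ((G.adjMatrix ℝ * G.adjMatrix ℝ) i j) ^ 2 := by
      intro j _
      rw [common_card]
      have h1 : ((Finset.univ.filter (fun k => G.Adj i k ∧ G.Adj k j)).card : ℝ) ^ 2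
          = (((Finset.univ.filter (fun k => G.Adj i k ∧ G.Adj k j)).card ^ 2 : ℕ) : ℝ) := by
        push_cast; ring
      rw [h1]
      exact_mod_cast Nat.le_self_pow (by norm_num) _
    have := Finset.sum_le_sum hterm
    linarith
  have := Finset.sum_le_sum (fun i (_ : i ∈ (Finset.univ : Finset V)) => key i)
  rw [Finset.sum_add_distrib, Finset.sum_sub_distrib, sum_sum_adj_sq] at this
  linarith

lemma tr4_upper
    (hc : ∀ i j : V, i ≠ j →
      (Finset.univ.filter (fun k => G.Adj i k ∧ G.Adj k j)).card ≤ 1) :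
    ((G.adjMatrix ℝ) ^ 4).trace
      ≤ 2 * (∑ v : V, (G.degree v : ℝ) ^ 2) - (∑ v : V, (G.degree v : ℝ)) := by
  rw [trace_pow4]
  have key : ∀ i : V, ∑ j : V, ((G.adjMatrix ℝ * G.adjMatrix ℝ) i j) ^ 2
      ≤ (G.degree i : ℝ)^2 + ((∑ j : V, (G.adjMatrix ℝ * G.adjMatrix ℝ) i j) - (G.degree i : ℝ)) := by
    intro i
    have hdecomp : ∀ (f : V → ℝ), ∑ j : V, f j = f i + ∑ j ∈ Finset.univ.erase i, f j := by
      intro f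
      rw [Finset.add_sum_erase _ f (Finset.mem_univ i)]
    rw [hdecomp (fun j => ((G.adjMatrix ℝ * G.adjMatrix ℝ) i j) ^ 2),
        hdecomp (fun j => (G.adjMatrix ℝ * G.adjMatrix ℝ) i j)]
    simp only [adjsq_diag]
    have hterm : ∀ j ∈ Finset.univ.erase i,
        ((G.adjMatrix ℝ * G.adjMatrix ℝ) i j) ^ 2 ≤ (G.adjMatrix ℝ * G.adjMatrix ℝ) i j := by
      intro j hj
      have hij : i ≠ j := fun h => (Finset.mem_erase.mp hj).1 h.symm
      rw [common_card]
      set c := (Finset.univ.filter (fun k => G.Adj i k ∧ G.Adj k j)).card with hcdef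
      have hc1 : c ≤ 1 := hc i j hij
      interval_cases c
      · norm_num
      · norm_num
    have := Finset.sum_le_sum hterm
    linarith
  have := Finset.sum_le_sum (fun i (_ : i ∈ (Finset.univ : Finset V)) => key i)
  rw [Finset.sum_add_distrib, Finset.sum_sub_distrib, sum_sum_adj_sq] at this
  linarith

end T4


section Combinatorics
variable {W : Type} [Fintype W] (H : SimpleGraph W)

lemma three_nbrs_le {a x y z : W} (hx : H.Adj a x) (hy : H.Adj a y) (hz : H.Adj a z)
    (hxy : x ≠ y) (hxz : x ≠ z) (hyz : y ≠ z) : 3 ≤ H.degree a := by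
  have hsub : ({x, y, z} : Finset W) ⊆ H.neighborFinset a := by
    intro t ht
    rcases Finset.mem_insert.mp ht with h | h
    · subst h; exact (H.mem_neighborFinset a t).mpr hx
    rcases Finset.mem_insert.mp h with h2 | h2
    · subst h2; exact (H.mem_neighborFinset a t).mpr hy
    · rw [Finset.mem_singleton] at h2; subst h2; exact (H.mem_neighborFinset a t).mpr hz
  have hcard : ({x, y, z} : Finset W).card = 3 := by
    rw [Finset.card_insert_of_notMem (by simp [hxy, hxz]),
      Finset.card_insert_of_notMem (by simp [hyz]), Finset.card_singleton]
  calc 3 = ({x, y, z} : Finset W).card := hcard.symm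
    _ ≤ (H.neighborFinset a).card := Finset.card_le_card hsub
    _ = H.degree a := card_neighborFinset_eq_degree _ _

lemma deg1_unique {a b c : W} (h1 : H.degree a = 1) (hb : H.Adj a b) (hc : H.Adj a c) :
    c = b := by
  by_contra hne
  have hsub : ({b, c} : Finset W) ⊆ H.neighborFinset a := by
    intro t ht
    rcases Finset.mem_insert.mp ht with h | h
    · subst h; exact (H.mem_neighborFinset a t).mpr hb
    · rw [Finset.mem_singleton] at h; subst h; exact (H.mem_neighborFinset a t).mpr hc
  have : 2 ≤ H.degree a := by
    calc 2 = ({b, c} : Finset W).card := (Finset.card_pair (fun h => hne h.symm)).symm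
      _ ≤ (H.neighborFinset a).card := Finset.card_le_card hsub
      _ = H.degree a := card_neighborFinset_eq_degree _ _
  omega

lemma deg2_mem {a b c x : W} (h2 : H.degree a = 2) (hb : H.Adj a b) (hc : H.Adj a c)
    (hbc : b ≠ c) (hx : H.Adj a x) : x = b ∨ x = c := by
  by_contra hcon
  push_neg at hcon
  have := three_nbrs_le H hb hc hx hbc (fun h => hcon.1 h.symm) (fun h => hcon.2 h.symm)
  omega

lemma nbr_exists {a : W} (h : 0 < H.degree a) : ∃ b, H.Adj a b := by
  rw [← card_neighborFinset_eq_degree, Finset.card_pos] at h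
  obtain ⟨b, hb⟩ := h
  exact ⟨b, (H.mem_neighborFinset a b).mp hb⟩

lemma deg2_other {a b : W} (h2 : H.degree a = 2) (hb : H.Adj a b) :
    ∃ c, H.Adj a c ∧ c ≠ b := by
  have hbmem : b ∈ H.neighborFinset a := (H.mem_neighborFinset a b).mpr hb
  have : 0 < ((H.neighborFinset a).erase b).card := by
    rw [Finset.card_erase_of_mem hbmem, card_neighborFinset_eq_degree, h2]
    omega
  obtain ⟨c, hc⟩ := Finset.card_pos.mp this
  obtain ⟨hcb, hcmem⟩ := Finset.mem_erase.mp hc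
  exact ⟨c, (H.mem_neighborFinset a c).mp hcmem, hcb⟩

end Combinatorics

noncomputable def wkStep {W : Type} (H : SimpleGraph W) (p : W × W) : W × W :=
  (p.2, if h : ∃ c, H.Adj p.2 c ∧ c ≠ p.1 then Classical.choose h else p.2)

noncomputable def wk {W : Type} (H : SimpleGraph W) (u u1 : W) : ℕ → W × W
  | 0 => (u, u1)
  | k + 1 => wkStep H (wk H u u1 k)

lemma wkStep_spec {W : Type} (H : SimpleGraph W) (p : W × W)
    (hp : ∃ c, H.Adj p.2 c ∧ c ≠ p.1) :
    H.Adj p.2 (wkStep H p).2 ∧ (wkStep H p).2 ≠ p.1 := by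
  simp only [wkStep]
  rw [dif_pos hp]
  exact Classical.choose_spec hp

lemma wk_fst {W : Type} (H : SimpleGraph W) (u u1 : W) (k : ℕ) :
    (wk H u u1 (k + 1)).1 = (wk H u u1 k).2 := by
  rfl

lemma path_structure {W : Type} [Fintype W] (H : SimpleGraph W) (n : ℕ) (hn : 2 ≤ n)
    (hcard : Fintype.card W = n) (u v : W) (huv : u ≠ v) (hu : H.degree u = 1)
    (hv : H.degree v = 1) (hw : ∀ w, w ≠ u → w ≠ v → H.degree w = 2) :
    Nonempty (H ≃g pathGraph n) ∨
      ∃ S : Finset W, S.Nonempty ∧ (∀ w ∈ S, H.degree w = 2) ∧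
        ∀ w ∈ S, ∀ y, H.Adj w y → y ∈ S := by
  have hu1ex : ∃ b, H.Adj u b := nbr_exists H (by omega)
  set u1 := Classical.choose hu1ex with hu1def
  have hu1 : H.Adj u u1 := Classical.choose_spec hu1ex
  set f : ℕ → W := fun k => (wk H u u1 k).1 with hfdef
  have hf0 : f 0 = u := rfl
  have hf1 : f 1 = u1 := rfl
  have hfsnd : ∀ k, f (k + 1) = (wk H u u1 k).2 := fun k => wk_fst H u u1 k
  have hfspec : ∀ k, (∃ c, H.Adj (f (k+1)) c ∧ c ≠ f k) →
      H.Adj (f (k+1)) (f (k+2)) ∧ f (k+2) ≠ f k := by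
    intro k hex
    have hex' : ∃ c, H.Adj ((wk H u u1 k).2) c ∧ c ≠ (wk H u u1 k).1 := by
      rw [← hfsnd k]; exact hex
    have := wkStep_spec H (wk H u u1 k) hex'
    constructor
    · rw [hfsnd k, hfsnd (k+1)]; exact this.1
    · rw [hfsnd (k+1)]; exact this.2
  -- main induction
  have main : ∀ k : ℕ, (∀ j, j ≤ k → f j ≠ v) →
      (∀ j, j ≤ k → H.Adj (f j) (f (j+1))) ∧ (∀ i j, i ≤ k + 1 → j < i → f i ≠ f j) := by
    intro k
    induction k with
    | zero =>
      intro _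
      constructor
      · intro j hj
        interval_cases j
        exact hu1
      · intro i j hi hj
        interval_cases i
        · omega
        · interval_cases j
          exact hu1.ne'
    | succ k ih =>
      intro hnv
      obtain ⟨hadj, hinj⟩ := ih (fun j hj => hnv j (by omega))
      have hkv : f (k+1) ≠ v := hnv (k+1) le_rfl
      have hku : f (k+1) ≠ u := by
        have := hinj (k+1) 0 le_rfl (by omega)
        rwa [hf0] at this
      have hdk : H.degree (f (k+1)) = 2 := hw _ hku hkv
      have hadjk : H.Adj (f (k+1)) (f k) := (hadj k le_rfl).symm
      have hex : ∃ c, H.Adj (f (k+1)) c ∧ c ≠ f k := deg2_other H hdk hadjk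
      obtain ⟨hadj2, hne2⟩ := hfspec k hex
      constructor
      · intro j hj
        rcases Nat.lt_or_ge j (k+1) with h | h
        · exact hadj j (by omega)
        · have : j = k + 1 := by omega
          subst this
          exact hadj2
      · intro i j hi hj
        rcases Nat.lt_or_ge i (k+2) with h | h
        · exact hinj i j (by omega) hj
        · have hi2 : i = k + 2 := by omega
          subst hi2
          -- f (k+2) ≠ f j for j < k+2
          rcases Nat.lt_or_ge j (k+1) with hjk | hjk
          · rcases Nat.lt_or_ge j k with hjk2 | hjk2
            · -- j < k : third neighbor argument at f j
              intro heq
              have hadjj : H.Adj (f (k+1)) (f j) := by rwa [heq] at hadj2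
              rcases Nat.eq_zero_or_pos j with hj0 | hjpos
              · subst hj0
                rw [hf0] at hadjj
                have h1 : f (k+1) = f 1 := by
                  rw [hf1]
                  exact deg1_unique H hu hu1 hadjj.symm
                have := hinj (k+1) 1 le_rfl (by omega)
                exact this h1
              · obtain ⟨m, rfl⟩ : ∃ m, j = m + 1 := ⟨j - 1, by omega⟩
                have hju : f (m+1) ≠ u := by
                  have := hinj (m+1) 0 (by omega) (by omega)
                  rwa [hf0] at this
                have hjv : f (m+1) ≠ v := hnv (m+1) (by omega)
                have hdj : H.degree (f (m+1)) = 2 := hw _ hju hjv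
                have hn1 : H.Adj (f (m+1)) (f m) := (hadj m (by omega)).symm
                have hn2 : H.Adj (f (m+1)) (f (m+2)) := hadj (m+1) (by omega)
                have hmne : f m ≠ f (m+2) := by
                  intro hh
                  exact hinj (m+2) m (by omega) (by omega) hh.symm
                have := deg2_mem H hdj hn1 hn2 hmne hadjj.symm
                rcases this with hh | hh
                · exact hinj (k+1) m le_rfl (by omega) hh
                · exact hinj (k+1) (m+2) le_rfl (by omega) hh
            · -- j = k
              have : j = k := by omega
              subst this
              exact hne2
          · -- j = k+1
            have : j = k + 1 := by omega
            subst this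
            exact hadj2.ne'
  -- endgame
  by_cases hvhit : ∃ k, f k = v ∧ k < n
  · set K := Nat.find hvhit with hKdef
    obtain ⟨hKv, hKn'⟩ : f K = v ∧ K < n := Nat.find_spec hvhit
    have hKmin : ∀ j, j < K → f j ≠ v := by
      intro j hj heq
      exact (Nat.find_min hvhit hj) ⟨heq, by omega⟩
    have hK1 : 1 ≤ K := by
      rcases Nat.eq_zero_or_pos K with h | h
      · exfalso; rw [h, hf0] at hKv; exact huv hKv
      · omega
    obtain ⟨hadj, hinj⟩ := main (K - 1) (fun j hj => hKmin j (by omega))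
    have hadj' : ∀ j, j + 1 ≤ K → H.Adj (f j) (f (j+1)) := fun j hj => hadj j (by omega)
    have hinj' : ∀ i j, i ≤ K → j ≤ K → i ≠ j → f i ≠ f j := by
      intro i j hi hj hij
      rcases Nat.lt_or_ge j i with h | h
      · exact hinj i j (by omega) h
      · intro heq
        exact hinj j i (by omega) (by omega) heq.symm
    have hchar : ∀ j, j ≤ K → ∀ y, H.Adj (f j) y →
        ∃ i, i ≤ K ∧ (i = j + 1 ∨ i + 1 = j) ∧ y = f i := by
      intro j hj y hy
      by_cases hj0 : j = 0
      · subst hj0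
        rw [hf0] at hy
        refine ⟨1, hK1, Or.inl rfl, ?_⟩
        rw [hf1]
        exact deg1_unique H hu hu1 hy
      · by_cases hjK : j = K
        · subst hjK
          have hKK : (K - 1) + 1 = K := by omega
          have hnb : H.Adj (f (K-1)) (f ((K-1)+1)) := hadj' (K-1) (by omega)
          rw [hKK] at hnb
          have hdegK : H.degree (f K) = 1 := by rw [hKv]; exact hv
          refine ⟨K - 1, by omega, Or.inr hKK, ?_⟩
          exact deg1_unique H hdegK hnb.symm hy
        · obtain ⟨m, rfl⟩ : ∃ m, j = m + 1 := ⟨j - 1, by omega⟩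
          have hju : f (m+1) ≠ u := by
            have := hinj' (m+1) 0 (by omega) (by omega) (by omega)
            rwa [hf0] at this
          have hjv : f (m+1) ≠ v := hKmin (m+1) (by omega)
          have hdj : H.degree (f (m+1)) = 2 := hw _ hju hjv
          have hn1 : H.Adj (f (m+1)) (f m) := (hadj' m (by omega)).symm
          have hn2 : H.Adj (f (m+1)) (f (m+2)) := hadj' (m+1) (by omega)
          have hmne : f m ≠ f (m+2) := hinj' m (m+2) (by omega) (by omega) (by omega)
          rcases deg2_mem H hdj hn1 hn2 hmne hy with h | h
          · exact ⟨m, by omega, Or.inr (by omega), h⟩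
          · exact ⟨m + 2, by omega, Or.inl (by omega), h⟩
    by_cases hKn : K = n - 1
    · -- construct the isomorphism
      left
      have hinjE : Function.Injective (fun i : Fin n => f i.val) := by
        intro i j hij
        by_contra hne
        have hne' : i.val ≠ j.val := fun h => hne (Fin.ext h)
        have hiK : i.val ≤ K := by have := i.isLt; omega
        have hjK : j.val ≤ K := by have := j.isLt; omega
        exact hinj' i.val j.val hiK hjK hne' hij
      have hbij : Function.Bijective (fun i : Fin n => f i.val) := by
        rw [Fintype.bijective_iff_injective_and_card]
        exact ⟨hinjE, by rw [hcard, Fintype.card_fin]⟩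
      refine ⟨(RelIso.mk (Equiv.ofBijective _ hbij) ?_ : pathGraph n ≃g H).symm⟩
      intro i j
      show H.Adj (f i.val) (f j.val) ↔ (pathGraph n).Adj i j
      have hiK : i.val ≤ K := by have := i.isLt; omega
      have hjK : j.val ≤ K := by have := j.isLt; omega
      constructor
      · intro hy
        obtain ⟨i', hi'K, hrel, heq⟩ := hchar i.val hiK _ hy
        have : j.val = i' := by
          by_contra hne
          exact hinj' j.val i' hjK hi'K hne heq
        rw [pathGraph_adj]
        omega
      · intro hadjp
        rw [pathGraph_adj] at hadjp
        rcases hadjp with h | h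
        · have := hadj' i.val (by omega)
          rw [show i.val + 1 = j.val from h] at this
          exact this
        · have := hadj' j.val (by omega)
          rw [show j.val + 1 = i.val from h] at this
          exact this.symm
    · -- closed set in the complement
      right
      have hKn2 : K < n - 1 := by omega
      set C : Finset W := (Finset.range (K+1)).image f with hCdef
      set S : Finset W := Finset.univ \ C with hSdef
      have hmemC : ∀ j, j ≤ K → f j ∈ C := by
        intro j hj
        exact Finset.mem_image.mpr ⟨j, Finset.mem_range.mpr (by omega), rfl⟩
      have hSne : S.Nonempty := by
        rw [hSdef, Finset.sdiff_nonempty]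
        intro hsub
        have h1 : (Finset.univ : Finset W).card ≤ C.card := Finset.card_le_card hsub
        have h2 : C.card ≤ K + 1 := le_trans (Finset.card_image_le) (by rw [Finset.card_range])
        rw [Finset.card_univ, hcard] at h1
        omega
      have hSdeg : ∀ w ∈ S, H.degree w = 2 := by
        intro w hwS
        have hwC : w ∉ C := (Finset.mem_sdiff.mp hwS).2
        refine hw w (fun h => hwC ?_) (fun h => hwC ?_)
        · rw [h, ← hf0]; exact hmemC 0 (by omega)
        · rw [h, ← hKv]; exact hmemC K le_rfl
      refine ⟨S, hSne, hSdeg, ?_⟩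
      intro w hwS y hy
      have hwC : w ∉ C := (Finset.mem_sdiff.mp hwS).2
      rw [hSdef, Finset.mem_sdiff]
      refine ⟨Finset.mem_univ y, fun hyC => ?_⟩
      obtain ⟨j, hjr, hjy⟩ := Finset.mem_image.mp hyC
      have hjK : j ≤ K := by have := Finset.mem_range.mp hjr; omega
      have : H.Adj (f j) w := by rw [hjy]; exact hy.symm
      obtain ⟨i, hiK, -, hwi⟩ := hchar j hjK w this
      exact hwC (by rw [hwi]; exact hmemC i hiK)
  · -- the walk never reaches v : cardinality contradiction
    exfalso
    have hnv : ∀ j, j ≤ n - 1 → f j ≠ v := by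
      intro j hj heq
      exact hvhit ⟨j, heq, by omega⟩
    obtain ⟨-, hinj⟩ := main (n - 2) (fun j hj => hnv j (by omega))
    have hginj : Function.Injective (fun i : Fin n => (⟨f i.val, fun h => hnv i.val (by have := i.isLt; omega) h⟩ : {w : W // ¬ (w = v)})) := by
      intro i j hij
      simp only [Subtype.mk.injEq] at hij
      by_contra hne
      have hne' : i.val ≠ j.val := fun h => hne (Fin.ext h)
      have hiK : i.val ≤ n - 1 := by have := i.isLt; omega
      have hjK : j.val ≤ n - 1 := by have := j.isLt; omega
      rcases Nat.lt_or_ge j.val i.val with h | h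
      · exact hinj i.val j.val (by omega) h hij
      · exact hinj j.val i.val (by omega) (by omega) hij.symm
    have hle := Fintype.card_le_of_injective _ hginj
    rw [Fintype.card_fin] at hle
    have hcs : Fintype.card {w : W // ¬ (w = v)} = n - 1 := by
      rw [Fintype.card_subtype_compl, Fintype.card_subtype_eq, hcard]
    omega


lemma int_mul_succ_nonneg (z : ℤ) : 0 ≤ z * (z + 1) := by
  rcases le_or_gt 0 z with h | h
  · exact mul_nonneg h (by omega)
  · have h1 : (0:ℤ) ≤ -z := by omega
    have h2 : (0:ℤ) ≤ -(z+1) := by omega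
    nlinarith [mul_nonneg h1 h2]

lemma degree_seq {W : Type} [Fintype W] (H : SimpleGraph W) (n : ℕ) (hn : 2 ≤ n)
    (hcard : Fintype.card W = n)
    (h1 : ∑ w : W, (H.degree w : ℝ) = 2 * n - 2)
    (h2 : ∑ w : W, (H.degree w : ℝ) ^ 2 ≤ 4 * n - 6) :
    ∃ u v : W, u ≠ v ∧ H.degree u = 1 ∧ H.degree v = 1 ∧
      ∀ w, w ≠ u → w ≠ v → H.degree w = 2 := by
  have S1 : ∑ w : W, (H.degree w : ℤ) = 2 * n - 2 := by
    have : ((∑ w : W, (H.degree w : ℤ) : ℤ) : ℝ) = ((2 * n - 2 : ℤ) : ℝ) := by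
      push_cast
      rw [← h1]
    exact_mod_cast this
  have S2 : ∑ w : W, (H.degree w : ℤ) ^ 2 ≤ 4 * n - 6 := by
    have : ((∑ w : W, (H.degree w : ℤ) ^ 2 : ℤ) : ℝ) ≤ ((4 * n - 6 : ℤ) : ℝ) := by
      push_cast
      rw [show ∑ w : W, (H.degree w : ℝ) ^ 2 = ∑ w : W, (H.degree w : ℝ) ^ 2 from rfl] at h2
      convert h2 using 2 <;> push_cast <;> ring_nf
    exact_mod_cast this
  set e : W → ℤ := fun w => (H.degree w : ℤ) - 2 with hedef
  have he_sum : ∑ w : W, e w = -2 := by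
    rw [hedef]
    rw [Finset.sum_sub_distrib, S1, Finset.sum_const, Finset.card_univ, hcard]
    push_cast
    ring
  have he_mul : ∑ w : W, e w * (e w + 1) ≤ 0 := by
    have expand : ∀ w : W, e w * (e w + 1) = (H.degree w : ℤ)^2 - 3 * (H.degree w : ℤ) + 2 := by
      intro w; rw [hedef]; ring
    rw [Finset.sum_congr rfl (fun w _ => expand w), Finset.sum_add_distrib,
      Finset.sum_sub_distrib, ← Finset.mul_sum, S1, Finset.sum_const, Finset.card_univ, hcard,
      nsmul_eq_mul]
    push_cast
    linarith [S2]
  have he_each : ∀ w : W, e w = 0 ∨ e w = -1 := by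
    have hzero : ∀ w ∈ Finset.univ, e w * (e w + 1) = 0 := by
      rw [← Finset.sum_eq_zero_iff_of_nonneg (fun w _ => int_mul_succ_nonneg (e w))]
      have h0 : (0:ℤ) ≤ ∑ w : W, e w * (e w + 1) :=
        Finset.sum_nonneg (fun w _ => int_mul_succ_nonneg (e w))
      omega
    intro w
    have := hzero w (Finset.mem_univ w)
    rcases mul_eq_zero.mp this with h | h
    · exact Or.inl h
    · exact Or.inr (by omega)
  have hdeg_each : ∀ w : W, H.degree w = 1 ∨ H.degree w = 2 := by
    intro w
    rcases he_each w with h | h <;> rw [hedef] at h <;> simp only at h <;> omega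
  set T : Finset W := Finset.univ.filter (fun w => H.degree w = 1) with hTdef
  have hTcard : T.card = 2 := by
    have hsplit : ∑ w : W, e w = ∑ w ∈ T, e w + ∑ w ∈ Finset.univ.filter (fun w => ¬ H.degree w = 1), e w := by
      rw [hTdef]
      exact (Finset.sum_filter_add_sum_filter_not _ _ _).symm
    have hT1 : ∑ w ∈ T, e w = -(T.card : ℤ) := by
      rw [Finset.sum_congr rfl (fun w hw => show e w = -1 by
        have := (Finset.mem_filter.mp hw).2
        rw [hedef]; simp only; omega)]
      rw [Finset.sum_const, nsmul_eq_mul, mul_neg_one]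
    have hT2 : ∑ w ∈ Finset.univ.filter (fun w => ¬ H.degree w = 1), e w = 0 := by
      apply Finset.sum_eq_zero
      intro w hw
      have h1 := (Finset.mem_filter.mp hw).2
      have := hdeg_each w
      rw [hedef]; simp only; omega
    rw [he_sum, hT1, hT2] at hsplit
    omega
  obtain ⟨u, v, huv, hTuv⟩ := Finset.card_eq_two.mp hTcard
  have hdu : H.degree u = 1 := by
    have : u ∈ T := by rw [hTuv]; exact Finset.mem_insert_self u {v}
    exact (Finset.mem_filter.mp this).2
  have hdv : H.degree v = 1 := by
    have : v ∈ T := by rw [hTuv]; exact Finset.mem_insert_of_mem (Finset.mem_singleton_self v)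
    exact (Finset.mem_filter.mp this).2
  refine ⟨u, v, huv, hdu, hdv, ?_⟩
  intro w hwu hwv
  have hwT : w ∉ T := by
    rw [hTuv]
    simp [hwu, hwv]
  rcases hdeg_each w with h | h
  · exact absurd (Finset.mem_filter.mpr ⟨Finset.mem_univ w, h⟩) hwT
  · exact h

section Wrappers
variable {V : Type} [Fintype V]

lemma decEq_eq_classical (inst : DecidableEq V) :
    inst = fun a b => Classical.propDecidable (a = b) := by
  funext a b
  exact Subsingleton.elim _ _

lemma aalpha_sq_trace_d [inst : DecidableEq V] (G : SimpleGraph V) (α : ℝ) :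
    ((Aalpha G α) ^ 2).trace
    = α ^ 2 * (∑ v : V, (G.degree v : ℝ) ^ 2)
      + (1 - α) ^ 2 * ∑ v : V, (G.degree v : ℝ) := by
  have h := decEq_eq_classical inst
  subst h
  exact aalpha_sq_trace G α

lemma tr4_lower_d [inst : DecidableEq V] (G : SimpleGraph V) :
    2 * (∑ v : V, (G.degree v : ℝ) ^ 2) - (∑ v : V, (G.degree v : ℝ))
      ≤ ((G.adjMatrix ℝ) ^ 4).trace := by
  have h := decEq_eq_classical inst
  subst h
  exact tr4_lower G

lemma tr4_upper_d [inst : DecidableEq V] (G : SimpleGraph V)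
    (hc : ∀ i j : V, i ≠ j →
      (Finset.univ.filter (fun k => G.Adj i k ∧ G.Adj k j)).card ≤ 1) :
    ((G.adjMatrix ℝ) ^ 4).trace
      ≤ 2 * (∑ v : V, (G.degree v : ℝ) ^ 2) - (∑ v : V, (G.degree v : ℝ)) := by
  have h := decEq_eq_classical inst
  subst h
  exact tr4_upper G hc

end Wrappers

lemma charpoly_inst_irrel {V : Type} [Fintype V] (i1 i2 : DecidableEq V) (M : Matrix V V ℝ) :
    @Matrix.charpoly ℝ _ V i1 _ M = @Matrix.charpoly ℝ _ V i2 _ M := by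
  have h : i1 = i2 := by
    funext a b
    exact Subsingleton.elim _ _
  rw [h]

lemma aalpha_zero {V : Type} [Fintype V] (G : SimpleGraph V) :
    Aalpha G 0 = G.adjMatrix ℝ := by
  unfold Aalpha
  norm_num

theorem path_determined_by_Aalpha_spectrum
    (α : ℝ) (hα0 : 0 ≤ α) (hα1 : α < 1) (n : ℕ) (hn : 1 ≤ n) :
    IsDSAalpha (pathGraph n) α := by
  intro W _W H hchar0
  have hchar : (Aalpha H α).charpoly = (Aalpha (pathGraph n) α).charpoly := by
    rw [hchar0]
    exact charpoly_inst_irrel _ _ _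
  have hcard : Fintype.card W = n := by
    have hdeg := congrArg Polynomial.natDegree hchar
    rw [Matrix.charpoly_natDegree_eq_dim, Matrix.charpoly_natDegree_eq_dim] at hdeg
    rwa [Fintype.card_fin] at hdeg
  rcases eq_or_lt_of_le hn with h1 | h2
  · -- n = 1
    have hn1 : n = 1 := h1.symm
    subst hn1
    have e : W ≃ Fin 1 := Fintype.equivFinOfCardEq hcard
    refine ⟨⟨e, ?_⟩⟩
    intro a b
    have hL : ¬ (pathGraph 1).Adj (e a) (e b) := by
      rw [pathGraph_adj]
      have := (e a).isLt
      have := (e b).isLt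
      omega
    have hR : ¬ H.Adj a b := by
      intro h
      have hab : a = b := Fintype.card_le_one_iff.mp (by omega) a b
      rw [hab] at h
      exact H.irrefl h
    exact iff_of_false hL hR
  · have hn2 : 2 ≤ n := h2
    have hHh := aalpha_isHermitian_s5 H α
    have hPh := aalpha_isHermitian_s5 (pathGraph n) α
    have ht := fun k => herm_trace_pow_eq hHh hPh hchar k
    have ht1 := ht 1
    rw [pow_one, pow_one, aalpha_trace, aalpha_trace] at ht1
    have ht2 := ht 2
    rw [aalpha_sq_trace_d, aalpha_sq_trace_d] at ht2
    have hpsum := path_deg_sum hn2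
    have hpsq := path_deg_sq_sum hn2
    have hS : (∑ w : W, (H.degree w : ℝ)) = 2 * n - 2 ∧
        (∑ w : W, (H.degree w : ℝ) ^ 2) ≤ 4 * n - 6 := by
      by_cases hα : α = 0
      · subst hα
        norm_num at ht2
        have S1 : (∑ w : W, (H.degree w : ℝ)) = 2 * n - 2 := by
          rw [ht2, hpsum]
        refine ⟨S1, ?_⟩
        have ht4 := ht 4
        rw [aalpha_zero, aalpha_zero] at ht4
        have hlow := tr4_lower_d H
        have hup := tr4_upper_d (pathGraph n) (fun i j hij => path_common hn2 i j hij)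
        rw [hpsum, hpsq] at hup
        rw [ht4] at hlow
        rw [S1] at hlow
        linarith
      · have hαpos : 0 < α := lt_of_le_of_ne hα0 (fun h => hα h.symm)
        have S1 : (∑ w : W, (H.degree w : ℝ)) = 2 * n - 2 := by
          have := mul_left_cancel₀ hα ht1
          rw [this, hpsum]
        refine ⟨S1, ?_⟩
        have hsq : α ^ 2 * (∑ w : W, (H.degree w : ℝ) ^ 2)
            = α ^ 2 * (∑ i : Fin n, ((pathGraph n).degree i : ℝ) ^ 2) := by
          rw [S1, hpsum] at ht2
          linarith
        have hα2 : (α : ℝ) ^ 2 ≠ 0 := pow_ne_zero 2 hα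
        have := mul_left_cancel₀ hα2 hsq
        rw [this, hpsq]
    obtain ⟨u, v, huv, hdu, hdv, hdw⟩ := degree_seq H n hn2 hcard hS.1 hS.2
    rcases path_structure H n hn2 hcard u v huv hdu hdv hdw with hiso | ⟨S, hSne, hSdeg, hScl⟩
    · exact hiso
    · exfalso
      have hroot := closed_set_root H α S hSne hSdeg hScl
      rw [hchar] at hroot
      exact path_not_root hn2 hα1 hroot
end

section
/- Let G_1 and G_2 be finite simple graphs on n_1 and n_2 vertices respectively, and let α be a real number. Then the characteristic polynomial of A_α(G_1 ∨ G_2) satisfies, for every real x not in the spectrum of A_α(G_1) shifted by αn_2 nor in the spectrum of A_α(G_2) shifted by αn_1: P_{A_α(G_1 ∨ G_2)}(x) = P_{A_α(G_1)}(x − αn_2) · P_{A_α(G_2)}(x − αn_1) · (1 − (1−α)² · Γ_{A_α(G_1)}(x − αn_2) · Γ_{A_α(G_2)}(x − αn_1)). -/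
open SimpleGraph Matrix Finset

attribute [local instance] Classical.propDecidable

section Aux
set_option linter.unusedSectionVars false

lemma charpoly_eval_aux {n : Type} [Fintype n] [DecidableEq n] (M : Matrix n n ℝ) (x : ℝ) :
    M.charpoly.eval x = Matrix.det (x • (1 : Matrix n n ℝ) - M) := by
  rw [Matrix.charpoly, ← Polynomial.coe_evalRingHom, RingHom.map_det]
  congr 1
  ext i j
  by_cases h : i = j <;>
    simp [h, Matrix.charmatrix_apply, Matrix.one_apply, Matrix.diagonal_apply]

variable {V W : Type} [Fintype V] [Fintype W] (G₁ : SimpleGraph V) (G₂ : SimpleGraph W)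

lemma joinG_adj_ll (a b : V) : (joinG G₁ G₂).Adj (Sum.inl a) (Sum.inl b) ↔ G₁.Adj a b := by
  simp [joinG]
lemma joinG_adj_lr (a : V) (b : W) : (joinG G₁ G₂).Adj (Sum.inl a) (Sum.inr b) := by
  simp [joinG]
lemma joinG_adj_rl (a : W) (b : V) : (joinG G₁ G₂).Adj (Sum.inr a) (Sum.inl b) := by
  simp [joinG]
lemma joinG_adj_rr (a b : W) : (joinG G₁ G₂).Adj (Sum.inr a) (Sum.inr b) ↔ G₂.Adj a b := by
  simp [joinG]

lemma degree_sum_ite {V : Type} [Fintype V] (G : SimpleGraph V) (v : V) :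
    (G.degree v : ℝ) = ∑ u, if G.Adj v u then (1:ℝ) else 0 := by
  classical
  rw [← card_neighborFinset_eq_degree, neighborFinset_eq_filter, card_filter]
  push_cast
  simp

lemma degree_joinG_inl (v : V) :
    ((joinG G₁ G₂).degree (Sum.inl v) : ℝ) = G₁.degree v + Fintype.card W := by
  rw [degree_sum_ite, degree_sum_ite, Fintype.sum_sum_type]
  congr 1
  · exact Finset.sum_congr rfl fun a _ => by
      by_cases h : G₁.Adj v a <;> simp [h, joinG_adj_ll]
  · rw [Finset.sum_congr rfl fun (b : W) _ => if_pos (joinG_adj_lr G₁ G₂ v b)]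
    rw [Finset.sum_const, nsmul_eq_mul, mul_one, Finset.card_univ]

lemma degree_joinG_inr (w : W) :
    ((joinG G₁ G₂).degree (Sum.inr w) : ℝ) = G₂.degree w + Fintype.card V := by
  rw [degree_sum_ite, degree_sum_ite, Fintype.sum_sum_type]
  rw [add_comm]
  congr 1
  · exact Finset.sum_congr rfl fun a _ => by
      by_cases h : G₂.Adj w a <;> simp [h, joinG_adj_rr]
  · rw [Finset.sum_congr rfl fun (b : V) _ => if_pos (joinG_adj_rl G₁ G₂ w b)]
    rw [Finset.sum_const, nsmul_eq_mul, mul_one, Finset.card_univ]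

lemma block_decomp (α x : ℝ) :
    x • (1 : Matrix (V ⊕ W) (V ⊕ W) ℝ) - Aalpha (joinG G₁ G₂) α =
      Matrix.fromBlocks
        ((x - α * Fintype.card W) • (1 : Matrix V V ℝ) - Aalpha G₁ α)
        (Matrix.of fun _ _ => -(1 - α))
        (Matrix.of fun _ _ => -(1 - α))
        ((x - α * Fintype.card V) • (1 : Matrix W W ℝ) - Aalpha G₂ α) := by
  ext i j
  cases i with
  | inl a =>
    cases j with
    | inl b =>
      simp only [Matrix.sub_apply, Matrix.smul_apply, Matrix.one_apply, Aalpha,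
        Matrix.add_apply, Matrix.diagonal_apply, SimpleGraph.adjMatrix_apply,
        Matrix.fromBlocks_apply₁₁, Matrix.of_apply, smul_eq_mul, Sum.inl.injEq]
      by_cases hab : a = b
      · subst hab
        rw [if_pos rfl, if_pos rfl, if_neg ((joinG G₁ G₂).irrefl), if_neg (G₁.irrefl),
          degree_joinG_inl]
        rw [if_pos rfl]; ring
      · rw [if_neg (by simpa using hab), if_neg hab, if_neg hab]
        by_cases h : G₁.Adj a b
        · rw [if_pos ((joinG_adj_ll G₁ G₂ a b).mpr h), if_pos h]; ring
        · rw [if_neg (fun hc => h ((joinG_adj_ll G₁ G₂ a b).mp hc)), if_neg h]; ring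
    | inr b =>
      simp only [Matrix.sub_apply, Matrix.smul_apply, Matrix.one_apply, Aalpha,
        Matrix.add_apply, Matrix.diagonal_apply, SimpleGraph.adjMatrix_apply,
        Matrix.fromBlocks_apply₁₂, Matrix.of_apply, smul_eq_mul]
      rw [if_neg (by simp), if_neg (by simp), if_pos (joinG_adj_lr G₁ G₂ a b)]
      ring
  | inr a =>
    cases j with
    | inl b =>
      simp only [Matrix.sub_apply, Matrix.smul_apply, Matrix.one_apply, Aalpha,
        Matrix.add_apply, Matrix.diagonal_apply, SimpleGraph.adjMatrix_apply,
        Matrix.fromBlocks_apply₂₁, Matrix.of_apply, smul_eq_mul]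
      rw [if_neg (by simp), if_neg (by simp), if_pos (joinG_adj_rl G₁ G₂ a b)]
      ring
    | inr b =>
      simp only [Matrix.sub_apply, Matrix.smul_apply, Matrix.one_apply, Aalpha,
        Matrix.add_apply, Matrix.diagonal_apply, SimpleGraph.adjMatrix_apply,
        Matrix.fromBlocks_apply₂₂, Matrix.of_apply, smul_eq_mul, Sum.inr.injEq]
      by_cases hab : a = b
      · subst hab
        rw [if_pos rfl, if_pos rfl, if_neg ((joinG G₁ G₂).irrefl), if_neg (G₂.irrefl),
          degree_joinG_inr]
        rw [if_pos rfl]; ring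
      · rw [if_neg (by simpa using hab), if_neg hab, if_neg hab]
        by_cases h : G₂.Adj a b
        · rw [if_pos ((joinG_adj_rr G₁ G₂ a b).mpr h), if_pos h]; ring
        · rw [if_neg (fun hc => h ((joinG_adj_rr G₁ G₂ a b).mp hc)), if_neg h]; ring

end Aux

lemma det_fromBlocks_const {V W : Type} [Fintype V] [Fintype W] [DecidableEq V] [DecidableEq W]
    (A : Matrix V V ℝ) (B : Matrix W W ℝ) (c : ℝ) (hA : A.det ≠ 0) (hB : B.det ≠ 0) :
    (Matrix.fromBlocks A (Matrix.of fun _ _ => c) (Matrix.of fun _ _ => c) B).det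
      = A.det * B.det *
        (1 - c ^ 2 * (∑ i, ∑ j, A⁻¹ i j) * (∑ i, ∑ j, B⁻¹ i j)) := by
  haveI : Invertible A := A.invertibleOfIsUnitDet (isUnit_iff_ne_zero.mpr hA)
  rw [Matrix.det_fromBlocks₁₁, invOf_eq_nonsing_inv]
  have hCB : (Matrix.of fun (_:W) (_:V) => c) * A⁻¹ * (Matrix.of fun (_:V) (_:W) => c) =
      Matrix.of (fun (_:W) (_:W) => c ^ 2 * ∑ i, ∑ j, A⁻¹ i j) := by
    ext i j
    simp only [Matrix.mul_apply, Matrix.of_apply]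
    calc ∑ v', (∑ v, c * A⁻¹ v v') * c
        = ∑ v', c ^ 2 * ∑ v, A⁻¹ v v' := by
          refine Finset.sum_congr rfl fun v' _ => ?_
          rw [← Finset.mul_sum]; ring
      _ = c ^ 2 * ∑ v', ∑ v, A⁻¹ v v' := by rw [Finset.mul_sum]
      _ = c ^ 2 * ∑ i, ∑ j, A⁻¹ i j := by rw [Finset.sum_comm]
  rw [hCB]
  set k : ℝ := c ^ 2 * ∑ i, ∑ j, A⁻¹ i j with hk
  have hsplit : B - Matrix.of (fun (_:W) (_:W) => k) =
      B + Matrix.replicateCol Unit (fun _ => -k) * Matrix.replicateRow Unit (fun _ => (1:ℝ)) := by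
    ext i j
    simp [Matrix.mul_apply, sub_eq_add_neg]
  have hdet2 : (B + Matrix.replicateCol Unit (fun _ => -k) * Matrix.replicateRow Unit (fun _ => (1:ℝ))).det
      = B.det * (1 - k * ∑ i, ∑ j, B⁻¹ i j) := by
    rw [Matrix.det_add_replicateCol_mul_replicateRow (isUnit_iff_ne_zero.mpr hB)]
    congr 1
    rw [Matrix.det_unique]
    simp only [Matrix.add_apply, Matrix.one_apply_eq, Matrix.mul_apply, Matrix.replicateRow_apply,
      Matrix.replicateCol_apply, one_mul]
    have h2 : ∑ j, (∑ i, B⁻¹ i j) * -k = -(k * ∑ j, ∑ i, B⁻¹ i j) := by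
      rw [← Finset.sum_mul]; ring
    rw [h2, Finset.sum_comm (s := univ) (t := univ) (f := fun i j => B⁻¹ i j)]
    ring
  rw [hsplit, hdet2, hk]
  ring


theorem charpoly_Aalpha_join
    {V W : Type} [Fintype V] [Fintype W]
    (G₁ : SimpleGraph V) (G₂ : SimpleGraph W) (α x : ℝ)
    (h₁ : ¬ (Aalpha G₁ α).charpoly.IsRoot (x - α * Fintype.card W))
    (h₂ : ¬ (Aalpha G₂ α).charpoly.IsRoot (x - α * Fintype.card V)) :
    (Aalpha (joinG G₁ G₂) α).charpoly.eval x =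
      (Aalpha G₁ α).charpoly.eval (x - α * Fintype.card W) *
        (Aalpha G₂ α).charpoly.eval (x - α * Fintype.card V) *
        (1 - (1 - α) ^ 2 *
          coronal (Aalpha G₁ α) (x - α * Fintype.card W) *
          coronal (Aalpha G₂ α) (x - α * Fintype.card V)) := by
  classical
  have hd₁ : ((x - α * Fintype.card W) • (1 : Matrix V V ℝ) - Aalpha G₁ α).det ≠ 0 := by
    rw [← charpoly_eval_aux]; exact h₁
  have hd₂ : ((x - α * Fintype.card V) • (1 : Matrix W W ℝ) - Aalpha G₂ α).det ≠ 0 := by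
    rw [← charpoly_eval_aux]; exact h₂
  rw [charpoly_eval_aux, block_decomp, det_fromBlocks_const _ _ _ hd₁ hd₂,
    charpoly_eval_aux (Aalpha G₁ α), charpoly_eval_aux (Aalpha G₂ α)]
  unfold coronal
  ring
end
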